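/- Fix integers N ≥ 2 and i ∈ {1,…,N}, vectors π, β ∈ [0,1]^N and b ∈ ℝ^N. Then the i-deviated drift system has a unique solution B ∈ ℝ^N, and it is given explicitly by: B^k = (A + (π^i/(N r^i))·b^i + b^k)/(r^k + β^k/N) for every k ≠ i, and B^i = ((1/N)·Σ_{j≠i} β^j B^j + b^i)/r^i, where r^j := 1 + ((N−1)/N)·π^j, a^{i,j} := (π^j + β^j π^i/(N r^i))/(r^j + β^j/N) for j ≠ i, and A := [(1/N)·Σ_{j≠i} a^{i,j}·(b^j + (π^i/(N r^i))·b^i)]/(1 − (1/N)·Σ_{j≠i} a^{i,j}); here 1 − (1/N)·Σ_{j≠i} a^{i,j} > 0 so A is well defined. -/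

import Mathlib

open Finset

/-- The `i`-deviated drift system of the `N`-player mutual holding game has a
unique solution, given explicitly in terms of `r^j := 1 + ((N-1)/N) π^j`,
`a^{i,j} := (π^j + β^j π^i/(N r^i))/(r^j + β^j/N)` and
`A := [(1/N) ∑_{j≠i} a^{i,j} (b^j + (π^i/(N r^i)) b^i)] / (1 - (1/N) ∑_{j≠i} a^{i,j})`;
in particular `1 - (1/N) ∑_{j≠i} a^{i,j} > 0`. -/
theorem deviated_drift_system_solution
    (N : ℕ) (hN : 2 ≤ N) (i : Fin N) (π β b : Fin N → ℝ)
    (hπ : ∀ j, π j ∈ Set.Icc (0 : ℝ) 1)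
    (hβ : ∀ j, β j ∈ Set.Icc (0 : ℝ) 1) :
    let r : Fin N → ℝ := fun j => 1 + (((N : ℝ) - 1) / N) * π j
    let a : Fin N → ℝ := fun j =>
      (π j + β j * π i / ((N : ℝ) * r i)) / (r j + β j / (N : ℝ))
    let A : ℝ :=
      ((1 / (N : ℝ)) * ∑ j ∈ Finset.univ.erase i,
          a j * (b j + (π i / ((N : ℝ) * r i)) * b i)) /
        (1 - (1 / (N : ℝ)) * ∑ j ∈ Finset.univ.erase i, a j)
    (0 < 1 - (1 / (N : ℝ)) * ∑ j ∈ Finset.univ.erase i, a j) ∧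
    (∃! B : Fin N → ℝ,
      (B i = (1 / (N : ℝ)) * ∑ j ∈ Finset.univ.erase i, β j * B j
          - (((N : ℝ) - 1) / N) * π i * B i + b i) ∧
      (∀ k, k ≠ i → B k = (1 / (N : ℝ)) * ∑ j, π j * B j
          - (1 / (N : ℝ)) * β k * B k - (((N : ℝ) - 1) / N) * π k * B k + b k)) ∧
    (∀ B : Fin N → ℝ,
      ((B i = (1 / (N : ℝ)) * ∑ j ∈ Finset.univ.erase i, β j * B j
          - (((N : ℝ) - 1) / N) * π i * B i + b i) ∧
       (∀ k, k ≠ i → B k = (1 / (N : ℝ)) * ∑ j, π j * B j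
          - (1 / (N : ℝ)) * β k * B k - (((N : ℝ) - 1) / N) * π k * B k + b k)) →
      (∀ k, k ≠ i →
        B k = (A + (π i / ((N : ℝ) * r i)) * b i + b k) / (r k + β k / (N : ℝ))) ∧
      B i = ((1 / (N : ℝ)) * ∑ j ∈ Finset.univ.erase i, β j * B j + b i) / r i) := by
  intro r a A
  have hn2 : (2:ℝ) ≤ (N:ℝ) := by exact_mod_cast hN
  have hn0 : (0:ℝ) < (N:ℝ) := by linarith
  have hnne : ((N:ℝ)) ≠ 0 := ne_of_gt hn0
  have hr : ∀ j, r j = 1 + (((N : ℝ) - 1) / N) * π j := fun j => rfl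
  have ha : ∀ j, a j = (π j + β j * π i / ((N : ℝ) * r i)) / (r j + β j / (N : ℝ)) :=
    fun j => rfl
  have hr1 : ∀ j, (1:ℝ) ≤ r j := by
    intro j
    rw [hr j]
    have h1 : (0:ℝ) ≤ ((N:ℝ) - 1) / N := div_nonneg (by linarith) hn0.le
    nlinarith [(hπ j).1]
  have hr0 : ∀ j, (0:ℝ) < r j := fun j => lt_of_lt_of_le one_pos (hr1 j)
  have hd0 : ∀ j, (0:ℝ) < r j + β j / (N:ℝ) :=
    fun j => add_pos_of_pos_of_nonneg (hr0 j) (div_nonneg (hβ j).1 hn0.le)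
  have hri : r i ≠ 0 := ne_of_gt (hr0 i)
  have hqN : π i / ((N:ℝ) * r i) ≤ 1 / N := by
    rw [div_le_div_iff₀ (mul_pos hn0 (hr0 i)) hn0]
    nlinarith [hr1 i, (hπ i).2]
  have hq0 : (0:ℝ) ≤ π i / ((N:ℝ) * r i) := div_nonneg (hπ i).1 (mul_pos hn0 (hr0 i)).le
  have ha01 : ∀ j, 0 ≤ a j ∧ a j ≤ 1 := by
    intro j
    rw [ha j]
    constructor
    · exact div_nonneg (add_nonneg (hπ j).1
        (div_nonneg (mul_nonneg (hβ j).1 (hπ i).1) (mul_pos hn0 (hr0 i)).le)) (hd0 j).le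
    · rw [div_le_one (hd0 j)]
      have h1 : β j * (π i / ((N:ℝ) * r i)) ≤ β j * (1 / N) :=
        mul_le_mul_of_nonneg_left hqN (hβ j).1
      have h2 : β j * π i / ((N:ℝ) * r i) = β j * (π i / ((N:ℝ) * r i)) := by ring
      have h3 : β j * (1/(N:ℝ)) = β j / N := by ring
      rw [hr j]
      have h4 : (0:ℝ) ≤ (((N:ℝ) - 1) / N) * π j :=
        mul_nonneg (div_nonneg (by linarith) hn0.le) (hπ j).1
      have h5 := (hπ j).2
      linarith
  have hcard : (Finset.univ.erase i).card = N - 1 := by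
    rw [card_erase_of_mem (mem_univ i), card_univ, Fintype.card_fin]
  have hSa_le : ∑ j ∈ Finset.univ.erase i, a j ≤ (N:ℝ) - 1 := by
    have h := Finset.sum_le_card_nsmul (Finset.univ.erase i) a 1 (fun j _ => (ha01 j).2)
    rw [hcard] at h
    have h2 : ((N - 1 : ℕ) : ℝ) = (N:ℝ) - 1 := by
      have : (1:ℕ) ≤ N := by omega
      push_cast [Nat.cast_sub this]
      ring
    calc ∑ j ∈ Finset.univ.erase i, a j ≤ (N - 1 : ℕ) • (1:ℝ) := h
      _ = (N:ℝ) - 1 := by rw [nsmul_eq_mul, mul_one, h2]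
  have hpos : 0 < 1 - (1 / (N : ℝ)) * ∑ j ∈ Finset.univ.erase i, a j := by
    have h1 : (1/(N:ℝ)) * ∑ j ∈ Finset.univ.erase i, a j ≤ (1/N) * ((N:ℝ) - 1) :=
      mul_le_mul_of_nonneg_left hSa_le (by positivity)
    have h2 : (1/(N:ℝ)) * ((N:ℝ) - 1) = 1 - 1/N := by field_simp
    have h3 : (0:ℝ) < 1/N := by positivity
    linarith
  have hne : (1 - (1 / (N : ℝ)) * ∑ j ∈ Finset.univ.erase i, a j) ≠ 0 := ne_of_gt hpos
  -- the key identity satisfied by A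
  have hkey : (1 - (1 / (N : ℝ)) * ∑ j ∈ Finset.univ.erase i, a j) *
      (A + π i / ((N : ℝ) * r i) * b i) =
      π i / ((N : ℝ) * r i) * b i + (1 / (N:ℝ)) * ∑ j ∈ Finset.univ.erase i, a j * b j := by
    have hA' : A * (1 - (1 / (N : ℝ)) * ∑ j ∈ Finset.univ.erase i, a j) =
        (1 / (N : ℝ)) * ∑ j ∈ Finset.univ.erase i,
          a j * (b j + (π i / ((N : ℝ) * r i)) * b i) :=
      div_mul_cancel₀ _ hne
    have hsplit : ∑ j ∈ Finset.univ.erase i, a j * (b j + (π i / ((N : ℝ) * r i)) * b i)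
        = (∑ j ∈ Finset.univ.erase i, a j * b j) +
          (∑ j ∈ Finset.univ.erase i, a j) * (π i / ((N : ℝ) * r i) * b i) := by
      simp only [mul_add]
      rw [Finset.sum_add_distrib, ← Finset.sum_mul]
    linear_combination hA' + (1/(N:ℝ)) * hsplit
  -- transform the full sum using the equation at i
  have htrans : ∀ B : Fin N → ℝ,
      r i * B i = (1/(N:ℝ)) * ∑ j ∈ Finset.univ.erase i, β j * B j + b i →
      (1/(N:ℝ)) * ∑ j, π j * B j = π i / ((N : ℝ) * r i) * b i +
        (1/(N:ℝ)) * ∑ j ∈ Finset.univ.erase i,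
          (π j + (π i / ((N : ℝ) * r i)) * β j) * B j := by
    intro B hBi
    have hsplit : ∑ j, π j * B j = π i * B i + ∑ j ∈ Finset.univ.erase i, π j * B j :=
      (Finset.add_sum_erase _ _ (mem_univ i)).symm
    have h1 : (1/(N:ℝ)) * (π i * B i) = (π i / ((N : ℝ) * r i)) *
        ((1/(N:ℝ)) * ∑ j ∈ Finset.univ.erase i, β j * B j + b i) := by
      rw [← hBi]
      field_simp
    rw [hsplit, mul_add]
    simp only [add_mul, Finset.sum_add_distrib, mul_assoc]
    rw [← Finset.mul_sum]
    linear_combination h1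
  have haj : ∀ j, (π j + (π i / ((N : ℝ) * r i)) * β j) = a j * (r j + β j / (N:ℝ)) := by
    intro j
    rw [ha j, div_mul_cancel₀ _ (ne_of_gt (hd0 j))]
    ring
  -- main lemma: every solution has the claimed closed form
  have hmain : ∀ B : Fin N → ℝ,
      ((B i = (1 / (N : ℝ)) * ∑ j ∈ Finset.univ.erase i, β j * B j
          - (((N : ℝ) - 1) / N) * π i * B i + b i) ∧
       (∀ k, k ≠ i → B k = (1 / (N : ℝ)) * ∑ j, π j * B j
          - (1 / (N : ℝ)) * β k * B k - (((N : ℝ) - 1) / N) * π k * B k + b k)) →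
      (∀ k, k ≠ i →
        B k = (A + (π i / ((N : ℝ) * r i)) * b i + b k) / (r k + β k / (N : ℝ))) ∧
      B i = ((1 / (N : ℝ)) * ∑ j ∈ Finset.univ.erase i, β j * B j + b i) / r i := by
    rintro B ⟨hi, hk⟩
    have hBi : r i * B i = (1/(N:ℝ)) * ∑ j ∈ Finset.univ.erase i, β j * B j + b i := by
      rw [hr i]; linear_combination hi
    have hdk : ∀ k, k ≠ i →
        (r k + β k / (N:ℝ)) * B k = (1/(N:ℝ)) * ∑ j, π j * B j + b k := by
      intro k hki
      rw [hr k]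
      linear_combination hk k hki
    have hS := htrans B hBi
    have hsum : ∑ j ∈ Finset.univ.erase i, (π j + (π i / ((N : ℝ) * r i)) * β j) * B j
        = ∑ j ∈ Finset.univ.erase i, a j * ((1/(N:ℝ)) * ∑ j', π j' * B j' + b j) :=
      Finset.sum_congr rfl (fun j hj => by
        rw [haj j, mul_assoc, hdk j (mem_erase.mp hj).1])
    rw [hsum] at hS
    have hsplit2 : ∑ j ∈ Finset.univ.erase i,
        a j * ((1/(N:ℝ)) * ∑ j', π j' * B j' + b j)
        = (∑ j ∈ Finset.univ.erase i, a j) * ((1/(N:ℝ)) * ∑ j', π j' * B j')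
          + ∑ j ∈ Finset.univ.erase i, a j * b j := by
      simp only [mul_add]
      rw [Finset.sum_add_distrib, ← Finset.sum_mul]
    rw [hsplit2] at hS
    have h3 : (1 - (1 / (N : ℝ)) * ∑ j ∈ Finset.univ.erase i, a j) *
        ((1/(N:ℝ)) * ∑ j, π j * B j) =
        (1 - (1 / (N : ℝ)) * ∑ j ∈ Finset.univ.erase i, a j) *
        (A + π i / ((N : ℝ) * r i) * b i) := by
      linear_combination hS - hkey
    have hS2 : (1/(N:ℝ)) * ∑ j, π j * B j = A + π i / ((N : ℝ) * r i) * b i :=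
      mul_left_cancel₀ hne h3
    refine ⟨fun k hki => ?_, ?_⟩
    · rw [eq_div_iff (ne_of_gt (hd0 k))]
      linear_combination hdk k hki + hS2
    · rw [eq_div_iff hri]
      linear_combination hBi
  refine ⟨hpos, ?_, hmain⟩
  -- existence and uniqueness
  set Bk0 : Fin N → ℝ :=
    fun k => (A + π i / ((N : ℝ) * r i) * b i + b k) / (r k + β k / (N:ℝ)) with hBk0def
  have hBk0 : ∀ k, Bk0 k = (A + π i / ((N : ℝ) * r i) * b i + b k) / (r k + β k / (N:ℝ)) :=
    fun k => rfl
  set B0 : Fin N → ℝ := Function.update Bk0 i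
    (((1/(N:ℝ)) * ∑ j ∈ Finset.univ.erase i, β j * Bk0 j + b i) / r i) with hB0def
  have hB0k : ∀ k, k ≠ i → B0 k = Bk0 k := fun k hk => Function.update_of_ne hk _ _
  have hB0i : B0 i = ((1/(N:ℝ)) * ∑ j ∈ Finset.univ.erase i, β j * Bk0 j + b i) / r i :=
    Function.update_self _ _ _
  have hsumβ : ∑ j ∈ Finset.univ.erase i, β j * B0 j
      = ∑ j ∈ Finset.univ.erase i, β j * Bk0 j :=
    Finset.sum_congr rfl (fun j hj => by rw [hB0k j (mem_erase.mp hj).1])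
  have hB0i' : r i * B0 i = (1/(N:ℝ)) * ∑ j ∈ Finset.univ.erase i, β j * B0 j + b i := by
    rw [hB0i, mul_div_cancel₀ _ hri, hsumβ]
  have hdB0 : ∀ k, k ≠ i →
      (r k + β k / (N:ℝ)) * B0 k = A + π i / ((N : ℝ) * r i) * b i + b k := by
    intro k hki
    rw [hB0k k hki, hBk0 k, mul_comm, div_mul_cancel₀ _ (ne_of_gt (hd0 k))]
  have hS0 : (1/(N:ℝ)) * ∑ j, π j * B0 j = A + π i / ((N : ℝ) * r i) * b i := by
    have h := htrans B0 hB0i'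
    have hsum0 : ∑ j ∈ Finset.univ.erase i,
        (π j + (π i / ((N : ℝ) * r i)) * β j) * B0 j
        = ∑ j ∈ Finset.univ.erase i, a j * (A + π i / ((N : ℝ) * r i) * b i + b j) :=
      Finset.sum_congr rfl (fun j hj => by
        rw [haj j, mul_assoc, hdB0 j (mem_erase.mp hj).1])
    rw [hsum0] at h
    have hsplit3 : ∑ j ∈ Finset.univ.erase i,
        a j * (A + π i / ((N : ℝ) * r i) * b i + b j)
        = (∑ j ∈ Finset.univ.erase i, a j) * (A + π i / ((N : ℝ) * r i) * b i)
          + ∑ j ∈ Finset.univ.erase i, a j * b j := by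
      simp only [mul_add]
      rw [Finset.sum_add_distrib, Finset.sum_add_distrib, ← Finset.sum_mul, ← Finset.sum_mul]
    rw [hsplit3] at h
    linear_combination h - hkey
  have heqi : B0 i = (1 / (N : ℝ)) * ∑ j ∈ Finset.univ.erase i, β j * B0 j
      - (((N : ℝ) - 1) / N) * π i * B0 i + b i := by
    have h := hB0i'
    rw [hr i] at h
    linear_combination h
  have heqk : ∀ k, k ≠ i → B0 k = (1 / (N : ℝ)) * ∑ j, π j * B0 j
      - (1 / (N : ℝ)) * β k * B0 k - (((N : ℝ) - 1) / N) * π k * B0 k + b k := by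
    intro k hki
    have h := hdB0 k hki
    rw [hr k] at h
    linear_combination h - hS0
  refine ⟨B0, ⟨heqi, heqk⟩, ?_⟩
  intro B' hB'
  obtain ⟨hk', hi'⟩ := hmain B' hB'
  funext k
  by_cases hki : k = i
  · rw [hki, hi', hB0i]
    have : ∑ j ∈ Finset.univ.erase i, β j * B' j
        = ∑ j ∈ Finset.univ.erase i, β j * Bk0 j :=
      Finset.sum_congr rfl (fun j hj => by rw [hk' j (mem_erase.mp hj).1, hBk0 j])
    rw [this]
  · rw [hk' k hki, hB0k k hki, hBk0 k]
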